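/- Let n > 4 and let G be a complete edge-colored graph with coloring γ in which no n-cycle is rainbow. Suppose G contains a rainbow (3n−8)-cycle v_0 → v_1 → ⋯ → v_{3n−9} → v_0, and let c_i = γ(v_i, v_{i+1}) denote its (pairwise distinct) edge colors, all indices taken modulo 3n−8. Then there is a dihedral relabeling σ of ℤ/(3n−8) (a map of the form σ(i) = i + t or σ(i) = t − i for some t) such that, setting w_i = v_{σ(i)} and d_i = γ(w_i, w_{i+1}), one has γ(w_i, w_{i+n−1}) ∈ {d_i, d_{i+1}} for every i modulo 3n−8. -/
import Mathlib


/-- A rainbow `m`-cycle in the complete graph on `V` edge-colored by `γ`: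
pairwise distinct vertices `v i` (`i` mod `m`) with pairwise distinct edge colors
`γ (v i) (v (i+1))`. -/
def RainbowCycle {V C : Type*} (γ : V → V → C) (m : ℕ) (v : ZMod m → V) : Prop :=
  Function.Injective v ∧ Function.Injective (fun i : ZMod m => γ (v i) (v (i + 1)))

/-- If `n > 4`, no `n`-cycle is rainbow, and `v` is a rainbow `(3n-8)`-cycle
with colors `c i = γ (v i) (v (i+1))`, then after a dihedral relabeling `σ` of
`ℤ/(3n-8)` we have `γ (w i) (w (i+n-1)) ∈ {d i, d (i+1)}` for every `i`,
where `w i = v (σ i)` and `d i = γ (w i) (w (i+1))`. -/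
lemma exists_collision {V C : Type*} (γ : V → V → C) {m n : ℕ} (hn : 1 < n) (hnm : n ≤ m)
    (v : ZMod m → V) (hvinj : Function.Injective v)
    (hno : ∀ u : ZMod n → V, ¬ RainbowCycle γ n u)
    (off : ℕ → ℕ) (hlt : ∀ j, j < n → off j < m)
    (hinj : ∀ j j', j < n → j' < n → off j = off j' → j = j')
    (i : ZMod m) :
    ∃ j j' : ℕ, j < n ∧ j' < n ∧ j ≠ j' ∧
      γ (v (i + (off j : ZMod m))) (v (i + (off ((j+1) % n) : ZMod m)))
        = γ (v (i + (off j' : ZMod m))) (v (i + (off ((j'+1) % n) : ZMod m))) := by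
  haveI : NeZero n := ⟨by omega⟩
  haveI : NeZero m := ⟨by omega⟩
  set u : ZMod n → V := fun j => v (i + (off j.val : ZMod m)) with hu
  have huinj : Function.Injective u := by
    intro a b hab
    have h1 : i + (off a.val : ZMod m) = i + (off b.val : ZMod m) := hvinj hab
    have h2 : (off a.val : ZMod m) = (off b.val : ZMod m) := by
      exact add_left_cancel h1
    have h3 : off a.val = off b.val := by
      have := congrArg ZMod.val h2
      rwa [ZMod.val_cast_of_lt (hlt _ a.val_lt), ZMod.val_cast_of_lt (hlt _ b.val_lt)] at this
    exact ZMod.val_injective n (hinj _ _ a.val_lt b.val_lt h3)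
  have hcol : ¬ Function.Injective (fun j : ZMod n => γ (u j) (u (j+1))) := by
    intro hc
    exact hno u ⟨huinj, hc⟩
  rw [Function.not_injective_iff] at hcol
  obtain ⟨a, b, hab, hne⟩ := hcol
  have hval : ∀ x : ZMod n, (x + 1).val = (x.val + 1) % n := by
    intro x
    rw [ZMod.val_add]
    haveI : Fact (1 < n) := ⟨hn⟩
    rw [ZMod.val_one]
  refine ⟨a.val, b.val, a.val_lt, b.val_lt, ?_, ?_⟩
  · intro h; exact hne (ZMod.val_injective n h)
  · simpa [hu, hval] using hab

lemma c_inj {V C : Type*} (γ : V → V → C) {n : ℕ} (hn : 4 < n)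
    (v : ZMod (3 * n - 8) → V) (hv : RainbowCycle γ (3 * n - 8) v)
    (i : ZMod (3*n-8)) (x y : ℕ) (hx : x < 3*n-8) (hy : y < 3*n-8)
    (h : γ (v (i + (x : ZMod (3*n-8)))) (v (i + ((x+1 : ℕ) : ZMod (3*n-8))))
       = γ (v (i + (y : ZMod (3*n-8)))) (v (i + ((y+1 : ℕ) : ZMod (3*n-8))))) : x = y := by
  haveI : NeZero (3*n-8) := ⟨by omega⟩
  have h2 : i + (x : ZMod (3*n-8)) = i + (y : ZMod (3*n-8)) := by
    apply hv.2
    simp only []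
    have e1 : i + ((x+1 : ℕ) : ZMod (3*n-8)) = i + (x : ZMod (3*n-8)) + 1 := by
      push_cast; ring
    have e2 : i + ((y+1 : ℕ) : ZMod (3*n-8)) = i + (y : ZMod (3*n-8)) + 1 := by
      push_cast; ring
    rw [← e1, ← e2]; exact h
  have h3 : (x : ZMod (3*n-8)) = (y : ZMod (3*n-8)) := add_left_cancel h2
  have := congrArg ZMod.val h3
  rwa [ZMod.val_cast_of_lt hx, ZMod.val_cast_of_lt hy] at this

lemma chord_exists {V C : Type*} (γ : V → V → C) (hsymm : ∀ x y, γ x y = γ y x)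
    {n : ℕ} (hn : 4 < n)
    (hno : ∀ u : ZMod n → V, ¬ RainbowCycle γ n u)
    (v : ZMod (3 * n - 8) → V) (hv : RainbowCycle γ (3 * n - 8) v)
    (i : ZMod (3*n-8)) :
    ∃ k : ℕ, k ≤ n - 2 ∧
      γ (v i) (v (i + ((n - 1 : ℕ) : ZMod (3*n-8))))
        = γ (v (i + (k : ZMod (3*n-8)))) (v (i + ((k+1 : ℕ) : ZMod (3*n-8)))) := by
  haveI : NeZero (3*n-8) := ⟨by omega⟩
  obtain ⟨j, j', hj, hj', hne, hcol⟩ := exists_collision γ (by omega : 1 < n)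
    (by omega : n ≤ 3*n-8) v hv.1 hno (fun j => j) (fun j hj => by show j < 3*n-8; omega)
    (fun j j' _ _ h => h) i
  by_cases h1 : j = n - 1
  · subst h1
    have hmod : (n - 1 + 1) % n = 0 := by
      have e : n - 1 + 1 = n := by omega
      rw [e, Nat.mod_self]
    rw [hmod] at hcol
    by_cases h2 : j' = n - 1
    · omega
    · have hmod' : (j' + 1) % n = j' + 1 := Nat.mod_eq_of_lt (by omega)
      rw [hmod'] at hcol
      refine ⟨j', by omega, ?_⟩
      rw [← hcol]
      have h0 : i + ((0:ℕ) : ZMod (3*n-8)) = i := by simp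
      rw [h0]
      exact hsymm _ _
  · have hmod : (j + 1) % n = j + 1 := Nat.mod_eq_of_lt (by omega)
    rw [hmod] at hcol
    by_cases h2 : j' = n - 1
    · subst h2
      have hmod' : (n - 1 + 1) % n = 0 := by
        have e : n - 1 + 1 = n := by omega
        rw [e, Nat.mod_self]
      rw [hmod'] at hcol
      refine ⟨j, by omega, ?_⟩
      rw [hcol]
      have h0 : i + ((0:ℕ) : ZMod (3*n-8)) = i := by simp
      rw [h0]
      exact hsymm _ _
    · have hmod' : (j' + 1) % n = j' + 1 := Nat.mod_eq_of_lt (by omega)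
      rw [hmod'] at hcol
      exact absurd (c_inj γ hn v hv i j j' (by omega) (by omega) hcol) hne

lemma key_lemma {V C : Type*} (γ : V → V → C) (hsymm : ∀ x y, γ x y = γ y x)
    {n : ℕ} (hn : 4 < n)
    (hno : ∀ u : ZMod n → V, ¬ RainbowCycle γ n u)
    (v : ZMod (3 * n - 8) → V) (hv : RainbowCycle γ (3 * n - 8) v)
    (i : ZMod (3*n-8)) (k₁ k₂ : ℕ) (hk₁ : k₁ ≤ n - 2) (hk₂ : k₂ ≤ n - 2)
    (hg₁ : γ (v i) (v (i + ((n - 1 : ℕ) : ZMod (3*n-8))))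
        = γ (v (i + (k₁ : ZMod (3*n-8)))) (v (i + ((k₁+1 : ℕ) : ZMod (3*n-8)))))
    (hg₂ : γ (v (i + ((2*n-5 : ℕ) : ZMod (3*n-8))))
             (v ((i + ((2*n-5 : ℕ) : ZMod (3*n-8))) + ((n - 1 : ℕ) : ZMod (3*n-8))))
        = γ (v ((i + ((2*n-5 : ℕ) : ZMod (3*n-8))) + (k₂ : ZMod (3*n-8))))
            (v ((i + ((2*n-5 : ℕ) : ZMod (3*n-8))) + ((k₂+1 : ℕ) : ZMod (3*n-8))))) :
    k₁ ≤ 1 ∨ n - 3 ≤ k₂ := by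
  haveI : NeZero (3*n-8) := ⟨by omega⟩
  by_contra hcon
  push_neg at hcon
  obtain ⟨hck₁, hck₂⟩ := hcon
  -- the offsets of the F-cycle
  set off : ℕ → ℕ := fun j =>
    if j = 0 then 0 else if j ≤ n - 3 then n - 2 + j else if j = n - 2 then 2 else 1 with hoff
  -- the color indices
  set X : ℕ → ℕ := fun j =>
    if j = 0 then k₁ else if j ≤ n - 4 then n - 2 + j else
      if j = n - 3 then 2*n - 5 + k₂ else if j = n - 2 then 1 else 0 with hX
  obtain ⟨j, j', hj, hj', hne, hcol⟩ := exists_collision γ (by omega : 1 < n)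
    (by omega : n ≤ 3*n-8) v hv.1 hno off
    (fun j hj => by simp only [hoff]; split_ifs <;> (try exact (‹False›).elim) <;> omega)
    (fun j j' hj hj' h => by simp only [hoff] at h; split_ifs at h <;> (try exact (‹False›).elim) <;> omega) i
  -- identify the colors of the cycle edges
  have colclaim : ∀ j : ℕ, j < n →
      γ (v (i + (off j : ZMod (3*n-8)))) (v (i + (off ((j+1) % n) : ZMod (3*n-8))))
        = γ (v (i + ((X j : ℕ) : ZMod (3*n-8)))) (v (i + ((X j + 1 : ℕ) : ZMod (3*n-8)))) := by
    intro j hjn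
    rcases eq_or_ne j 0 with rfl | hj0
    · -- chord at position i
      have e1 : off 0 = 0 := by simp [hoff]
      have e2 : (0+1) % n = 1 := Nat.mod_eq_of_lt (by omega)
      have e3 : off 1 = n - 1 := by simp only [hoff]; split_ifs <;> (try exact (‹False›).elim) <;> omega
      have e4 : X 0 = k₁ := by simp [hX]
      rw [e2, e1, e3, e4]
      have h0 : i + ((0:ℕ) : ZMod (3*n-8)) = i := by simp
      rw [h0]
      exact hg₁
    rcases eq_or_ne j (n-3) with rfl | hj3
    · -- chord at position i + (2n-5)
      have e1 : off (n-3) = 2*n-5 := by simp only [hoff]; split_ifs <;> (try exact (‹False›).elim) <;> omega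
      have e2 : (n-3+1) % n = n-2 := by
        have e : n-3+1 = n-2 := by omega
        rw [e, Nat.mod_eq_of_lt (by omega)]
      have e3 : off (n-2) = 2 := by simp only [hoff]; split_ifs <;> (try exact (‹False›).elim) <;> omega
      have e4 : X (n-3) = 2*n-5+k₂ := by simp only [hX]; split_ifs <;> (try exact (‹False›).elim) <;> omega
      rw [e2, e1, e3, e4]
      have c1 : (i + ((2*n-5 : ℕ) : ZMod (3*n-8))) + ((n - 1 : ℕ) : ZMod (3*n-8))
          = i + ((2 : ℕ) : ZMod (3*n-8)) := by
        have : (2*n-5 : ℕ) + (n-1 : ℕ) = (3*n-8) + 2 := by omega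
        rw [add_assoc, ← Nat.cast_add, this]
        push_cast [ZMod.natCast_self]
        ring
      have c2 : (i + ((2*n-5 : ℕ) : ZMod (3*n-8))) + ((k₂ : ℕ) : ZMod (3*n-8))
          = i + ((2*n-5+k₂ : ℕ) : ZMod (3*n-8)) := by push_cast; ring
      have c3 : (i + ((2*n-5 : ℕ) : ZMod (3*n-8))) + ((k₂+1 : ℕ) : ZMod (3*n-8))
          = i + ((2*n-5+k₂+1 : ℕ) : ZMod (3*n-8)) := by push_cast; ring
      rw [c1, c2, c3] at hg₂
      exact hg₂
    rcases eq_or_ne j (n-2) with rfl | hj2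
    · have e1 : off (n-2) = 2 := by simp only [hoff]; split_ifs <;> (try exact (‹False›).elim) <;> omega
      have e2 : (n-2+1) % n = n-1 := by
        have e : n-2+1 = n-1 := by omega
        rw [e, Nat.mod_eq_of_lt (by omega)]
      have e3 : off (n-1) = 1 := by simp only [hoff]; split_ifs <;> (try exact (‹False›).elim) <;> omega
      have e4 : X (n-2) = 1 := by simp only [hX]; split_ifs <;> (try exact (‹False›).elim) <;> omega
      rw [e2, e1, e3, e4]
      have : (1+1 : ℕ) = (2:ℕ) := by norm_num
      rw [this]
      exact hsymm _ _
    rcases eq_or_ne j (n-1) with rfl | hj1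
    · have e1 : off (n-1) = 1 := by simp only [hoff]; split_ifs <;> (try exact (‹False›).elim) <;> omega
      have e2 : (n-1+1) % n = 0 := by
        have e : n - 1 + 1 = n := by omega
        rw [e, Nat.mod_self]
      have e3 : off 0 = 0 := by simp [hoff]
      have e4 : X (n-1) = 0 := by simp only [hX]; split_ifs <;> (try exact (‹False›).elim) <;> omega
      rw [e2, e1, e3, e4]
      have : (0+1 : ℕ) = (1:ℕ) := by norm_num
      rw [this]
      exact hsymm _ _
    · -- arc edge: 1 ≤ j ≤ n-4
      have hrange : 1 ≤ j ∧ j ≤ n - 4 := by omega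
      have e1 : off j = n-2+j := by simp only [hoff]; split_ifs <;> (try exact (‹False›).elim) <;> omega
      have e2 : (j+1) % n = j+1 := Nat.mod_eq_of_lt (by omega)
      have e3 : off (j+1) = n-2+j+1 := by simp only [hoff]; split_ifs <;> (try exact (‹False›).elim) <;> omega
      have e4 : X j = n-2+j := by simp only [hX]; split_ifs <;> (try exact (‹False›).elim) <;> omega
      rw [e2, e1, e3, e4]
  rw [colclaim j hj, colclaim j' hj'] at hcol
  have hXlt : ∀ j, j < n → X j < 3*n-8 := by
    intro j hjn; simp only [hX]; split_ifs <;> (try exact (‹False›).elim) <;> omega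
  have hXX : X j = X j' := c_inj γ hn v hv i _ _ (hXlt j hj) (hXlt j' hj') hcol
  -- X is injective given 2 ≤ k₁ ≤ n-2 and k₂ ≤ n-4
  have : j = j' := by
    simp only [hX] at hXX
    split_ifs at hXX <;> (try exact (‹False›).elim) <;> omega
  exact hne this

theorem stmt3 {V C : Type*} (γ : V → V → C) (hsymm : ∀ x y, γ x y = γ y x)
    (n : ℕ) (hn : 4 < n)
    (hno : ∀ u : ZMod n → V, ¬ RainbowCycle γ n u)
    (v : ZMod (3 * n - 8) → V) (hv : RainbowCycle γ (3 * n - 8) v) :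
    ∃ σ : ZMod (3 * n - 8) → ZMod (3 * n - 8),
      ((∃ t, ∀ i, σ i = i + t) ∨ (∃ t, ∀ i, σ i = t - i)) ∧
      ∀ i : ZMod (3 * n - 8),
        γ (v (σ i)) (v (σ (i + ((n - 1 : ℕ) : ZMod (3 * n - 8))))) ∈
          ({γ (v (σ i)) (v (σ (i + 1))),
            γ (v (σ (i + 1))) (v (σ (i + 2)))} : Set C) := by
  haveI : NeZero (3*n-8) := ⟨by omega⟩
  have hch := chord_exists γ hsymm hn hno v hv
  choose K hK1 hK2 using hch
  have hkey : ∀ i : ZMod (3*n-8), 2 ≤ K i →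
      n - 3 ≤ K (i + ((2*n-5 : ℕ) : ZMod (3*n-8))) := by
    intro i h2
    have h := key_lemma γ hsymm hn hno v hv i (K i)
      (K (i + ((2*n-5:ℕ) : ZMod (3*n-8)))) (hK1 i) (hK1 _) (hK2 i) (hK2 _)
    rcases h with h | h
    · omega
    · exact h
  by_cases hall : ∀ i, K i ≤ 1
  · refine ⟨fun i => i, Or.inl ⟨0, fun i => (add_zero i).symm⟩, ?_⟩
    intro i
    show γ (v i) (v (i + ((n-1:ℕ) : ZMod (3*n-8)))) ∈ _
    have h := hK2 i
    rcases Nat.le_one_iff_eq_zero_or_eq_one.mp (hall i) with h0 | h1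
    · rw [h0] at h
      norm_num at h
      rw [Set.mem_insert_iff]
      left
      exact h
    · rw [h1] at h
      norm_num at h
      rw [Set.mem_insert_iff]
      right
      rw [Set.mem_singleton_iff]
      rw [h]
  · push_neg at hall
    obtain ⟨i0, hi0⟩ := hall
    have iter : ∀ k : ℕ,
        2 ≤ K (i0 + (k : ZMod (3*n-8)) * ((2*n-5:ℕ) : ZMod (3*n-8))) ∧
        (1 ≤ k → n - 3 ≤ K (i0 + (k : ZMod (3*n-8)) * ((2*n-5:ℕ) : ZMod (3*n-8)))) := by
      intro k
      induction k with
      | zero =>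
        constructor
        · simpa using (by omega : 2 ≤ K i0)
        · omega
      | succ k ih =>
        have e : i0 + ((k+1 : ℕ) : ZMod (3*n-8)) * ((2*n-5:ℕ) : ZMod (3*n-8))
            = (i0 + (k : ZMod (3*n-8)) * ((2*n-5:ℕ) : ZMod (3*n-8))) + ((2*n-5:ℕ) : ZMod (3*n-8)) := by
          push_cast; ring
        rw [e]
        have h := hkey _ ih.1
        exact ⟨by omega, fun _ => h⟩
    have hcop : Nat.Coprime (2*n-5) (3*n-8) := by
      have h3 : Nat.gcd (2*n-5) (3*n-8) ∣ 3*(2*n-5) := (Nat.gcd_dvd_left _ _).mul_left 3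
      have h2 : Nat.gcd (2*n-5) (3*n-8) ∣ 2*(3*n-8) := (Nat.gcd_dvd_right _ _).mul_left 2
      have h1 : Nat.gcd (2*n-5) (3*n-8) ∣ 1 := by
        have e : 3*(2*n-5) - 2*(3*n-8) = 1 := by omega
        rw [← e]; exact Nat.dvd_sub h3 h2
      exact Nat.dvd_one.mp h1
    have hu : IsUnit ((2*n-5:ℕ) : ZMod (3*n-8)) := (ZMod.isUnit_iff_coprime _ _).mpr hcop
    have hRall : ∀ j : ZMod (3*n-8), n - 3 ≤ K j := by
      intro j
      obtain ⟨uu, huu⟩ := hu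
      have hinv : (↑uu⁻¹ : ZMod (3*n-8)) * ((2*n-5:ℕ) : ZMod (3*n-8)) = 1 := by
        rw [← huu]; exact uu.inv_mul
      have hme : ((j - i0) * ↑uu⁻¹) * ((2*n-5:ℕ) : ZMod (3*n-8)) = j - i0 := by
        rw [mul_assoc, hinv, mul_one]
      by_cases h0 : (j - i0) * (↑uu⁻¹ : ZMod (3*n-8)) = 0
      · have hji : j = i0 := by
          rw [h0, zero_mul] at hme
          have := hme.symm
          rw [sub_eq_zero] at this
          exact this
        have hm := (iter (3*n-8)).2 (by omega)
        rw [ZMod.natCast_self, zero_mul, add_zero] at hm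
        rwa [hji]
      · set e : ZMod (3*n-8) := (j - i0) * ↑uu⁻¹ with he
        have hk : 1 ≤ e.val := by
          rcases Nat.eq_zero_or_pos e.val with h | h
          · exact absurd ((ZMod.val_eq_zero _).mp h) h0
          · exact h
        have hcast : ((e.val : ℕ) : ZMod (3*n-8)) = e := by simp [ZMod.natCast_val]
        have hj : i0 + (e.val : ZMod (3*n-8)) * ((2*n-5:ℕ) : ZMod (3*n-8)) = j := by
          rw [hcast, hme]; ring
        have := (iter e.val).2 hk
        rwa [hj] at this
    refine ⟨fun i => -i, Or.inr ⟨0, fun i => (zero_sub i).symm⟩, ?_⟩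
    intro i
    show γ (v (-i)) (v (-(i + ((n-1:ℕ) : ZMod (3*n-8))))) ∈
      ({γ (v (-i)) (v (-(i+1))), γ (v (-(i+1))) (v (-(i+2)))} : Set C)
    set j : ZMod (3*n-8) := -(i + ((n-1:ℕ) : ZMod (3*n-8))) with hj
    have hA : -i = j + ((n-1:ℕ) : ZMod (3*n-8)) := by rw [hj]; ring
    have hB : -(i+1) = j + ((n-2:ℕ) : ZMod (3*n-8)) := by
      rw [hj]
      have e : ((n-1:ℕ) : ZMod (3*n-8)) = ((n-2:ℕ) : ZMod (3*n-8)) + 1 := by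
        have e2 : (n-1:ℕ) = (n-2)+1 := by omega
        rw [e2]; push_cast; ring
      rw [e]; ring
    have hC : -(i+2) = j + ((n-3:ℕ) : ZMod (3*n-8)) := by
      rw [hj]
      have e : ((n-1:ℕ) : ZMod (3*n-8)) = ((n-3:ℕ) : ZMod (3*n-8)) + 2 := by
        have e2 : (n-1:ℕ) = (n-3)+2 := by omega
        rw [e2]; push_cast; ring
      rw [e]; ring
    have hc := hK2 j
    have hKj := hK1 j
    have hKj' := hRall j
    have hLHS : γ (v (-i)) (v j) = γ (v (j + ((K j : ℕ) : ZMod (3*n-8))))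
        (v (j + ((K j + 1 : ℕ) : ZMod (3*n-8)))) := by
      rw [hsymm, hA]
      exact hc
    rcases (by omega : K j = n - 3 ∨ K j = n - 2) with h | h
    · rw [Set.mem_insert_iff]
      right
      rw [Set.mem_singleton_iff]
      rw [hLHS, h]
      have e1 : ((n-3)+1 : ℕ) = (n-2 : ℕ) := by omega
      rw [e1, ← hB, ← hC]
      exact hsymm _ _
    · rw [Set.mem_insert_iff]
      left
      rw [hLHS, h]
      have e1 : ((n-2)+1 : ℕ) = (n-1 : ℕ) := by omega
      rw [e1, ← hA, ← hB]
      exact hsymm _ _
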